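/- Let Q(z) = ∏_{j=1}^n (z − λ_j) and Q^#(ξ) = ∏_{j=1}^n (ξ − conj(λ_j)), and suppose there exist smooth real functions α(t) > 0, c(t), B(t) such that α'(t)·Q(z)·Q^#(ξ) − c(t)·α(t)·Q'(z)·(Q^#)'(ξ) = B(t)·(α(t)·Q(z)·Q^#(ξ) − 1) for all (z, ξ) ∈ ℂ² and all t in an interval, with c(t) ≠ 0. Then deg Q = 1. -/

import Mathlib

open Polynomial

/-- If `α'(t)·Q(z)·Q^#(ξ) − c(t)·α(t)·Q'(z)·(Q^#)'(ξ) = B(t)·(α(t)·Q(z)·Q^#(ξ) − 1)`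
holds identically in `(z, ξ)` for `t` in an interval, with `α > 0` and `c ≠ 0`,
then the monic polynomial `Q` has degree one. -/
theorem degree_one_of_polarized_identity
    (n : ℕ) (hn : 1 ≤ n) (lam : Fin n → ℂ)
    (α c B : ℝ → ℝ) (hα : Differentiable ℝ α) (hαpos : ∀ t, 0 < α t)
    (t₀ t₁ : ℝ) (ht : t₀ < t₁)
    (hc : ∀ t ∈ Set.Ioo t₀ t₁, c t ≠ 0)
    (hid : ∀ t ∈ Set.Ioo t₀ t₁, ∀ z ξ : ℂ,
      ((deriv α t : ℝ) : ℂ) * (∏ j, (z - lam j)) * (∏ j, (ξ - (starRingEnd ℂ) (lam j)))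
        - (c t : ℂ) * (α t : ℂ) *
          ((∏ j, (X - C (lam j)) : Polynomial ℂ).derivative.eval z) *
          ((∏ j, (X - C ((starRingEnd ℂ) (lam j))) : Polynomial ℂ).derivative.eval ξ)
      = (B t : ℂ) * ((α t : ℂ) * (∏ j, (z - lam j)) *
          (∏ j, (ξ - (starRingEnd ℂ) (lam j))) - 1)) :
    n = 1 := by
  by_contra hne
  have hn2 : 2 ≤ n := by omega
  set t : ℝ := (t₀ + t₁) / 2 with htdef
  have htmem : t ∈ Set.Ioo t₀ t₁ := ⟨by simp [htdef]; linarith, by simp [htdef]; linarith⟩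
  set Q : Polynomial ℂ := ∏ j, (X - C (lam j)) with hQ
  set Qs : Polynomial ℂ := ∏ j, (X - C ((starRingEnd ℂ) (lam j))) with hQs
  have hQm : Q.Monic := monic_prod_of_monic _ _ (fun j _ => monic_X_sub_C _)
  have hQsm : Qs.Monic := monic_prod_of_monic _ _ (fun j _ => monic_X_sub_C _)
  have hQdeg : Q.natDegree = n := by
    rw [hQ, natDegree_prod_of_monic _ _ (fun j _ => monic_X_sub_C _)]
    simp
  have hQsdeg : Qs.natDegree = n := by
    rw [hQs, natDegree_prod_of_monic _ _ (fun j _ => monic_X_sub_C _)]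
    simp
  have hQeval : ∀ z : ℂ, Q.eval z = ∏ j, (z - lam j) := by
    intro z; simp [hQ, eval_prod]
  have hQseval : ∀ ξ : ℂ, Qs.eval ξ = ∏ j, (ξ - (starRingEnd ℂ) (lam j)) := by
    intro ξ; simp [hQs, eval_prod]
  have H : ∀ z ξ : ℂ,
      ((deriv α t : ℝ) : ℂ) * Q.eval z * Qs.eval ξ
        - (c t : ℂ) * (α t : ℂ) * (Q.derivative.eval z) * (Qs.derivative.eval ξ)
      = (B t : ℂ) * ((α t : ℂ) * Q.eval z * Qs.eval ξ - 1) := by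
    intro z ξ
    rw [hQeval, hQseval]
    exact hid t htmem z ξ
  -- Step 1: α' t = B t * α t
  have hQsne : Qs ≠ 0 := hQsm.ne_zero
  obtain ⟨ξ₀, hξ₀⟩ : ∃ ξ : ℂ, Qs.eval ξ ≠ 0 := by
    by_contra h
    push_neg at h
    exact hQsne (Polynomial.funext (by simpa using h))
  have key1 : ((deriv α t : ℝ) : ℂ) = (B t : ℂ) * (α t : ℂ) := by
    have hp : (C ((((deriv α t : ℝ) : ℂ) - (B t : ℂ) * (α t : ℂ)) * Qs.eval ξ₀) * Q
        - C ((c t : ℂ) * (α t : ℂ) * Qs.derivative.eval ξ₀) * Q.derivative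
        + C ((B t : ℂ))) = 0 := by
      apply Polynomial.funext
      intro z
      have := H z ξ₀
      simp only [eval_add, eval_sub, eval_mul, eval_C, eval_zero]
      ring_nf
      ring_nf at this
      linear_combination this
    have hcoeff := congrArg (fun p => Polynomial.coeff p n) hp
    simp only [coeff_add, coeff_sub, coeff_zero, coeff_C_mul] at hcoeff
    have h1 : Q.coeff n = 1 := by
      have := hQm.coeff_natDegree
      rwa [hQdeg] at this
    have h2 : Q.derivative.coeff n = 0 := by
      apply coeff_eq_zero_of_natDegree_lt
      calc Q.derivative.natDegree ≤ Q.natDegree - 1 := natDegree_derivative_le Q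
        _ < n := by omega
    have h3 : (C ((B t : ℂ))).coeff n = 0 := by
      rw [coeff_C]
      simp only [if_neg (by omega : ¬ n = 0)]
    rw [h1, h2, h3] at hcoeff
    simp at hcoeff
    rcases hcoeff with h | h
    · linear_combination h
    · exact absurd h hξ₀
  -- Step 2: c α Q'(z) Qs'(ξ) = B for all z ξ
  have H2 : ∀ z ξ : ℂ,
      (c t : ℂ) * (α t : ℂ) * (Q.derivative.eval z) * (Qs.derivative.eval ξ) = (B t : ℂ) := by
    intro z ξ
    have := H z ξ
    rw [key1] at this
    ring_nf at this ⊢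
    linear_combination -this
  -- Qs' ≠ 0
  have hQsder : Qs.derivative ≠ 0 := by
    intro h
    have := Polynomial.natDegree_eq_zero_of_derivative_eq_zero h
    omega
  obtain ⟨ξ₁, hξ₁⟩ : ∃ ξ : ℂ, Qs.derivative.eval ξ ≠ 0 := by
    by_contra h
    push_neg at h
    exact hQsder (Polynomial.funext (by simpa using h))
  have hcα : (c t : ℂ) * (α t : ℂ) ≠ 0 := by
    apply mul_ne_zero
    · exact_mod_cast hc t htmem
    · exact_mod_cast (hαpos t).ne'
  -- Q' is constant
  set k : ℂ := (B t : ℂ) / ((c t : ℂ) * (α t : ℂ) * Qs.derivative.eval ξ₁) with hk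
  have hQ' : Q.derivative = C k := by
    apply Polynomial.funext
    intro z
    have := H2 z ξ₁
    rw [eval_C, hk]
    rw [eq_div_iff (mul_ne_zero hcα hξ₁)]
    linear_combination this
  -- coefficient of X^(n-1) in Q' is n ≠ 0, contradicting Q' = C k
  have hco : Q.derivative.coeff (n - 1) = Q.coeff (n - 1 + 1) * ((n - 1 : ℕ) + 1 : ℂ) :=
    coeff_derivative Q (n - 1)
  have h1 : Q.coeff (n - 1 + 1) = 1 := by
    rw [show n - 1 + 1 = n by omega]
    have := hQm.coeff_natDegree
    rwa [hQdeg] at this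
  have h2 : Q.derivative.coeff (n - 1) = 0 := by
    rw [hQ', coeff_C, if_neg (by omega : ¬ n - 1 = 0)]
  rw [h2, h1, one_mul] at hco
  exact Nat.cast_add_one_ne_zero (R := ℂ) (n - 1) hco.symm
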